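/- Let $m \ge 3$ be an odd integer and let $\boldsymbol{\mu}_m$ act on $\mathbb{C}[y_2, y_3]$ with weights $\operatorname{wt}(y_2) = \frac{m+1}{2}$, $\operatorname{wt}(y_3) = -1$ (mod $m$). Then for any invariant polynomials $\phi_1, \phi_2$, the form $\mathrm{d}\phi_1 \wedge \mathrm{d}\phi_2$ lies in $\bigl((y_2, y_3) y_2 + (y_2, y_3) y_3^{(m-1)/2}\bigr)\, \mathrm{d} y_2 \wedge \mathrm{d} y_3$. -/

import Mathlib

open MvPolynomial


private lemma coeff_aeval_scale (c : Fin 2 → ℂ) (φ : MvPolynomial (Fin 2) ℂ) (n : Fin 2 →₀ ℕ) :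
    coeff n (aeval (fun i => (C (c i) * X i : MvPolynomial (Fin 2) ℂ)) φ)
      = (∏ i, c i ^ n i) * coeff n φ := by
  induction φ using MvPolynomial.induction_on' with
  | add p q hp hq => simp only [map_add, coeff_add, hp, hq, mul_add]
  | monomial s a =>
    have e0 : (C (∏ i, c i ^ s i) : MvPolynomial (Fin 2) ℂ)
        = s.prod fun i e => (C (c i) : MvPolynomial (Fin 2) ℂ) ^ e := by
      rw [Finsupp.prod_pow, map_prod]
      simp [map_pow]
    have e1 : (s.prod fun i e => (C (c i) * X i : MvPolynomial (Fin 2) ℂ) ^ e)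
        = C (∏ i, c i ^ s i) * monomial s 1 := by
      simp only [mul_pow]
      rw [Finsupp.prod_mul, monomial_eq, map_one, one_mul, e0]
    rw [aeval_monomial, e1, algebraMap_eq, ← mul_assoc, ← map_mul,
      coeff_C_mul, coeff_monomial]
    by_cases h : s = n
    · subst h; simp [coeff_monomial]; ring
    · simp [coeff_monomial, h]

private lemma invar_support (m : ℕ) (ζ : ℂ) (hζ : IsPrimitiveRoot ζ m)
    (φ : MvPolynomial (Fin 2) ℂ)
    (h : MvPolynomial.aeval
        (fun i : Fin 2 =>
          (MvPolynomial.C (ζ ^ (if i = 0 then (m + 1) / 2 else m - 1)) *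
            MvPolynomial.X i : MvPolynomial (Fin 2) ℂ)) φ = φ)
    (n : Fin 2 →₀ ℕ) (hn : n ∈ φ.support) :
    m ∣ (m + 1) / 2 * n 0 + (m - 1) * n 1 := by
  have hc := coeff_aeval_scale (fun i => ζ ^ (if i = 0 then (m + 1) / 2 else m - 1)) φ n
  rw [h] at hc
  have hne : coeff n φ ≠ 0 := mem_support_iff.mp hn
  have : (∏ i : Fin 2, (ζ ^ (if i = 0 then (m + 1) / 2 else m - 1)) ^ n i) = 1 :=
    mul_right_cancel₀ hne (by rw [← hc, one_mul])
  rw [Fin.prod_univ_two] at this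
  simp only [if_pos rfl, if_neg (by decide : ¬((1:Fin 2) = 0))] at this
  rw [← pow_mul, ← pow_mul, ← pow_add] at this
  exact (hζ.pow_eq_one_iff_dvd _).mp this

private lemma wt_cast (m x y : ℕ) (hm : 3 ≤ m) (hodd : Odd m)
    (h : m ∣ (m + 1) / 2 * x + (m - 1) * y) : (x : ZMod m) = 2 * y := by
  have h0 : (((m + 1) / 2 * x + (m - 1) * y : ℕ) : ZMod m) = 0 :=
    (ZMod.natCast_eq_zero_iff _ _).mpr h
  push_cast [Nat.cast_sub (show 1 ≤ m by omega)] at h0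
  rw [ZMod.natCast_self] at h0
  have hk : ((((m + 1) / 2 : ℕ)) : ZMod m) * 2 = 1 := by
    have h2 : ((m + 1) / 2 * 2 : ℕ) = m + 1 := by
      obtain ⟨j, hj⟩ := hodd; omega
    have : ((((m + 1) / 2 * 2 : ℕ)) : ZMod m) = ((m + 1 : ℕ) : ZMod m) := by rw [h2]
    push_cast [ZMod.natCast_self] at this
    simpa using this
  have hxy : ((((m + 1) / 2 : ℕ)) : ZMod m) * x = y := by linear_combination h0
  calc (x : ZMod m) = (((((m + 1) / 2 : ℕ)) : ZMod m) * 2) * x := by rw [hk, one_mul]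
    _ = 2 * (((((m + 1) / 2 : ℕ)) : ZMod m) * x) := by ring
    _ = 2 * y := by rw [hxy]

private lemma dvd_of_zmod_two_mul (m s : ℕ) (hodd : Odd m)
    (h : (s : ZMod m) = 2 * ((0 : ℕ) : ZMod m)) : m ∣ s := by
  simp only [Nat.cast_zero, mul_zero] at h
  exact (ZMod.natCast_eq_zero_iff _ _).mp h

private lemma dvd_of_two_mul_zero (m s : ℕ) (hodd : Odd m)
    (h : ((0 : ℕ) : ZMod m) = 2 * (s : ZMod m)) : m ∣ s := by
  have h2 : (((2 * s : ℕ)) : ZMod m) = 0 := by push_cast; rw [← h]; simp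
  exact Nat.Coprime.dvd_of_dvd_mul_left (Nat.coprime_two_right.mpr hodd)
    ((ZMod.natCast_eq_zero_iff _ _).mp h2)

private lemma monomial_mem_ideal (m : ℕ) (u : Fin 2 →₀ ℕ) (c : ℂ)
    (h : (1 ≤ u 0 ∧ 1 ≤ u 1) ∨ 2 ≤ u 0 ∨ (m + 1) / 2 ≤ u 1) :
    (monomial u c : MvPolynomial (Fin 2) ℂ) ∈ Ideal.span ({X 0 ^ 2, X 0 * X 1,
      X 0 * X 1 ^ ((m - 1) / 2), X 1 ^ ((m + 1) / 2)} : Set (MvPolynomial (Fin 2) ℂ)) := by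
  have step : ∀ (e : Fin 2 →₀ ℕ) (g : MvPolynomial (Fin 2) ℂ),
      g ∈ ({X 0 ^ 2, X 0 * X 1, X 0 * X 1 ^ ((m - 1) / 2),
        X 1 ^ ((m + 1) / 2)} : Set (MvPolynomial (Fin 2) ℂ)) →
      g = monomial e 1 → e ≤ u →
      (monomial u c : MvPolynomial (Fin 2) ℂ) ∈ Ideal.span ({X 0 ^ 2, X 0 * X 1,
        X 0 * X 1 ^ ((m - 1) / 2), X 1 ^ ((m + 1) / 2)} : Set (MvPolynomial (Fin 2) ℂ)) := by
    intro e g hg hge hle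
    have : (monomial u c : MvPolynomial (Fin 2) ℂ) = monomial (u - e) c * g := by
      rw [hge, monomial_mul, mul_one, tsub_add_cancel_of_le hle]
    rw [this]
    exact Ideal.mul_mem_left _ _ (Ideal.subset_span hg)
  rcases h with ⟨h0, h1⟩ | h0 | h1
  · refine step (Finsupp.single 0 1 + Finsupp.single 1 1) (X 0 * X 1) (by simp) ?_ ?_
    · rw [show (X 0 * X 1 : MvPolynomial (Fin 2) ℂ)
          = monomial (Finsupp.single 0 1) 1 * monomial (Finsupp.single 1 1) 1 from rfl,
        monomial_mul, mul_one]
    · rw [Finsupp.le_def]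
      intro a
      fin_cases a <;> simp [Finsupp.single_apply] <;> omega
  · refine step (Finsupp.single 0 2) (X 0 ^ 2) (by simp) (X_pow_eq_monomial) ?_
    rw [Finsupp.le_def]
    intro a
    fin_cases a <;> simp [Finsupp.single_apply] <;> omega
  · refine step (Finsupp.single 1 ((m + 1) / 2)) (X 1 ^ ((m + 1) / 2)) (by simp)
      (X_pow_eq_monomial) ?_
    rw [Finsupp.le_def]
    intro a
    fin_cases a <;> simp [Finsupp.single_apply] <;> omega

private lemma key (m : ℕ) (hm : 3 ≤ m) (hodd : Odd m) (s t : Fin 2 →₀ ℕ) (a b : ℂ)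
    (hs : m ∣ (m + 1) / 2 * s 0 + (m - 1) * s 1)
    (ht : m ∣ (m + 1) / 2 * t 0 + (m - 1) * t 1) :
    pderiv 0 (monomial s a) * pderiv 1 (monomial t b)
      - pderiv 1 (monomial s a) * pderiv 0 (monomial t b) ∈
    Ideal.span ({X 0 ^ 2, X 0 * X 1,
      X 0 * X 1 ^ ((m - 1) / 2), X 1 ^ ((m + 1) / 2)} : Set (MvPolynomial (Fin 2) ℂ)) := by
  have hs' := wt_cast m (s 0) (s 1) hm hodd hs
  have ht' := wt_cast m (t 0) (t 1) hm hodd ht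
  rw [pderiv_monomial, pderiv_monomial, pderiv_monomial, pderiv_monomial,
    monomial_mul, monomial_mul]
  set u := (s - Finsupp.single 0 1) + (t - Finsupp.single 1 1) with hu
  set v := (s - Finsupp.single 1 1) + (t - Finsupp.single 0 1) with hv
  have hu0 : u 0 = (s 0 - 1) + t 0 := by
    simp [hu, Finsupp.tsub_apply, Finsupp.single_apply]
  have hu1 : u 1 = s 1 + (t 1 - 1) := by
    simp [hu, Finsupp.tsub_apply, Finsupp.single_apply]
  have hv0 : v 0 = s 0 + (t 0 - 1) := by
    simp [hv, Finsupp.tsub_apply, Finsupp.single_apply]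
  have hv1 : v 1 = (s 1 - 1) + t 1 := by
    simp [hv, Finsupp.tsub_apply, Finsupp.single_apply]
  by_cases c1 : s 0 = 0 ∨ t 1 = 0
  · have e1 : a * (s 0 : ℂ) * (b * (t 1 : ℂ)) = 0 := by
      rcases c1 with h | h <;> rw [h] <;> simp
    by_cases c2 : s 1 = 0 ∨ t 0 = 0
    · have e2 : a * (s 1 : ℂ) * (b * (t 0 : ℂ)) = 0 := by
        rcases c2 with h | h <;> rw [h] <;> simp
      rw [e1, e2]
      simp only [monomial_zero, sub_zero]
      exact Ideal.zero_mem _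
    · push_neg at c2
      rw [e1]
      simp only [monomial_zero, zero_sub]
      refine neg_mem (monomial_mem_ideal m v _ ?_)
      rw [hv0, hv1]
      by_cases ct1 : t 1 = 0
      · -- then m ∣ t 0
        rw [ct1] at ht'
        have := Nat.le_of_dvd (Nat.pos_of_ne_zero c2.2) (dvd_of_zmod_two_mul m (t 0) hodd ht')
        right; left; omega
      · by_cases cs0 : s 0 = 0 ∧ t 0 = 1
        · rw [cs0.1] at hs'
          have := Nat.le_of_dvd (Nat.pos_of_ne_zero c2.1) (dvd_of_two_mul_zero m (s 1) hodd hs')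
          right; right; omega
        · left
          constructor <;> [skip; omega]
          rcases Nat.eq_zero_or_pos (s 0) with h0 | h0
          · simp only [h0, not_true_eq_false, true_and] at cs0
            have := Nat.pos_of_ne_zero c2.2
            omega
          · omega
  · push_neg at c1
    by_cases c2 : s 1 = 0 ∨ t 0 = 0
    · have hmem : (monomial u (a * (s 0 : ℂ) * (b * (t 1 : ℂ))) : MvPolynomial (Fin 2) ℂ)
          ∈ Ideal.span ({X 0 ^ 2, X 0 * X 1,
            X 0 * X 1 ^ ((m - 1) / 2), X 1 ^ ((m + 1) / 2)} : Set (MvPolynomial (Fin 2) ℂ)) := by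
        refine monomial_mem_ideal m u _ ?_
        rw [hu0, hu1]
        by_cases cs1 : s 1 = 0
        · rw [cs1] at hs'
          have := Nat.le_of_dvd (Nat.pos_of_ne_zero c1.1) (dvd_of_zmod_two_mul m (s 0) hodd hs')
          right; left; omega
        · -- then t 0 = 0, so m ∣ t 1
          have ct0 : t 0 = 0 := by tauto
          rw [ct0] at ht'
          have := Nat.le_of_dvd (Nat.pos_of_ne_zero c1.2) (dvd_of_two_mul_zero m (t 1) hodd ht')
          right; right; omega
      have e2 : a * (s 1 : ℂ) * (b * (t 0 : ℂ)) = 0 := by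
        rcases c2 with h | h <;> rw [h] <;> simp
      rw [e2]
      simp only [monomial_zero, sub_zero]
      exact hmem
    · push_neg at c2
      have huv : u = v := by
        have e0 : u 0 = v 0 := by
          rw [hu0, hv0]
          have := Nat.pos_of_ne_zero c1.1
          have := Nat.pos_of_ne_zero c2.2
          omega
        have e1 : u 1 = v 1 := by
          rw [hu1, hv1]
          have := Nat.pos_of_ne_zero c1.2
          have := Nat.pos_of_ne_zero c2.1
          omega
        ext i
        revert i
        exact Fin.forall_fin_two.mpr ⟨e0, e1⟩
      rw [huv, ← map_sub]
      refine monomial_mem_ideal m v _ ?_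
      left
      rw [hv0, hv1]
      have := Nat.pos_of_ne_zero c1.1
      have := Nat.pos_of_ne_zero c2.2
      have := Nat.pos_of_ne_zero c2.1
      omega

/-- Case k3A: for odd `m ≥ 3` and the `μ_m`-action on `ℂ[y₂, y₃]` with weights
`((m+1)/2, -1 ≡ m-1)`, for any invariant polynomials `φ₁, φ₂`, the Jacobian
determinant of `(φ₁, φ₂)` lies in the ideal
`(y₂, y₃)·y₂ + (y₂, y₃)·y₃^((m-1)/2)
  = (y₂², y₂ y₃, y₂ y₃^((m-1)/2), y₃^((m+1)/2))`.
Here `X 0 = y₂`, `X 1 = y₃`. -/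
theorem stmt6 (m : ℕ) (hm : 3 ≤ m) (hodd : Odd m)
    (ζ : ℂ) (hζ : IsPrimitiveRoot ζ m)
    (φ1 φ2 : MvPolynomial (Fin 2) ℂ)
    (h1 : MvPolynomial.aeval
        (fun i : Fin 2 =>
          (MvPolynomial.C (ζ ^ (if i = 0 then (m + 1) / 2 else m - 1)) *
            MvPolynomial.X i : MvPolynomial (Fin 2) ℂ)) φ1 = φ1)
    (h2 : MvPolynomial.aeval
        (fun i : Fin 2 =>
          (MvPolynomial.C (ζ ^ (if i = 0 then (m + 1) / 2 else m - 1)) *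
            MvPolynomial.X i : MvPolynomial (Fin 2) ℂ)) φ2 = φ2) :
    MvPolynomial.pderiv 0 φ1 * MvPolynomial.pderiv 1 φ2 -
      MvPolynomial.pderiv 1 φ1 * MvPolynomial.pderiv 0 φ2 ∈
    Ideal.span ({MvPolynomial.X 0 ^ 2, MvPolynomial.X 0 * MvPolynomial.X 1,
      MvPolynomial.X 0 * MvPolynomial.X 1 ^ ((m - 1) / 2),
      MvPolynomial.X 1 ^ ((m + 1) / 2)} : Set (MvPolynomial (Fin 2) ℂ)) := by
  have hsup1 : ∀ n ∈ φ1.support, m ∣ (m + 1) / 2 * n 0 + (m - 1) * n 1 :=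
    invar_support m ζ hζ φ1 h1
  have hsup2 : ∀ n ∈ φ2.support, m ∣ (m + 1) / 2 * n 0 + (m - 1) * n 1 :=
    invar_support m ζ hζ φ2 h2
  have expand : MvPolynomial.pderiv 0 φ1 * MvPolynomial.pderiv 1 φ2 -
        MvPolynomial.pderiv 1 φ1 * MvPolynomial.pderiv 0 φ2
      = ∑ s ∈ φ1.support, ∑ t ∈ φ2.support,
        (pderiv 0 (monomial s (coeff s φ1)) * pderiv 1 (monomial t (coeff t φ2))
          - pderiv 1 (monomial s (coeff s φ1)) * pderiv 0 (monomial t (coeff t φ2))) := by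
    conv_lhs => rw [← support_sum_monomial_coeff φ1, ← support_sum_monomial_coeff φ2]
    rw [map_sum, map_sum, map_sum, map_sum, Finset.sum_mul_sum, Finset.sum_mul_sum,
      ← Finset.sum_sub_distrib]
    exact Finset.sum_congr rfl fun s _ => (Finset.sum_sub_distrib _ _).symm
  rw [expand]
  exact Ideal.sum_mem _ fun s hs => Ideal.sum_mem _ fun t ht =>
    key m hm hodd s t _ _ (hsup1 s hs) (hsup2 t ht)
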